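/- Let d ≥ 2 be a real number. For every real ν > 0 and every real α ≥ 0, g₁(ν,α,d) ≤ g₂(ν,d), where g₁(ν,α,d) := (ν + 1 + (d−1)·α·ν)·exp(−(ν² + (d−1)·α²)/2) and g₂(ν,d) := ((ν + 1 + √(h₁(ν,d)))/2)·exp(−ν²/2 + h₂(ν,d)). -/

import Mathlib

/-- `h₁(ν,d) = (ν+1)² + 4ν²(d−1)`. -/
noncomputable def h1 (ν d : ℝ) : ℝ := (ν + 1) ^ 2 + 4 * ν ^ 2 * (d - 1)

/-- `h₂(ν,d) = ((ν+1)·√(h₁(ν,d)) − (ν+1)²)/(4ν²(d−1)) − 1/2`. -/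
noncomputable def h2 (ν d : ℝ) : ℝ :=
  ((ν + 1) * Real.sqrt (h1 ν d) - (ν + 1) ^ 2) / (4 * ν ^ 2 * (d - 1)) - 1 / 2

/-- `g₁(ν,α,d) = (ν + 1 + (d−1)·α·ν)·exp(−(ν² + (d−1)·α²)/2)`. -/
noncomputable def g1 (ν α d : ℝ) : ℝ :=
  (ν + 1 + (d - 1) * α * ν) * Real.exp (-(ν ^ 2 + (d - 1) * α ^ 2) / 2)

/-- `g₂(ν,d) = ((ν + 1 + √(h₁(ν,d)))/2)·exp(−ν²/2 + h₂(ν,d))`. -/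
noncomputable def g2 (ν d : ℝ) : ℝ :=
  ((ν + 1 + Real.sqrt (h1 ν d)) / 2) * Real.exp (-ν ^ 2 / 2 + h2 ν d)

/-- For real `d ≥ 2`, every `ν > 0` and every `α ≥ 0`, `g₁(ν,α,d) ≤ g₂(ν,d)`. -/
theorem stmt_6 (d : ℝ) (hd : 2 ≤ d) (ν : ℝ) (hν : 0 < ν) (α : ℝ) (hα : 0 ≤ α) :
    g1 ν α d ≤ g2 ν d := by
  have hc0 : (0:ℝ) < d - 1 := by linarith
  have hh1 : 0 ≤ h1 ν d := by
    unfold h1; nlinarith [sq_nonneg (ν + 1), sq_nonneg ν]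
  set s := Real.sqrt (h1 ν d) with hs
  have hs2 : s ^ 2 = (ν + 1) ^ 2 + 4 * ν ^ 2 * (d - 1) := by
    rw [hs, Real.sq_sqrt hh1, h1]
  have hsge : ν + 1 ≤ s := by
    nlinarith [Real.sqrt_nonneg (h1 ν d), hν.le]
  set β := (s - (ν + 1)) / (2 * ν * (d - 1)) with hβ
  have hden : (2 * ν * (d - 1)) ≠ 0 := by positivity
  have hβ0 : 0 ≤ β := by
    apply div_nonneg (by linarith) (by positivity)
  -- β satisfies:  (d-1) * β = (s - (ν+1)) / (2ν)
  have hcβ : (d - 1) * β * (2 * ν) = s - (ν + 1) := by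
    rw [hβ]; field_simp
  -- B + Cβ = (ν+1+s)/2
  have key1 : ν + 1 + (d - 1) * β * ν = (ν + 1 + s) / 2 := by
    nlinarith [hcβ]
  -- stationarity: (d-1)*ν = (d-1)*β*(ν+1+(d-1)*β*ν)
  have hstat : (d - 1) * ν = (d - 1) * β * (ν + 1 + (d - 1) * β * ν) := by
    rw [key1]
    nlinarith [hcβ, hs2]
  -- h2 = -(d-1)*β^2/2
  have key2 : h2 ν d = -((d - 1) * β ^ 2) / 2 := by
    rw [h2, hβ, ← hs]
    field_simp
    linear_combination 4 * hs2
  have hBpos : 0 < ν + 1 + (d - 1) * β * ν := by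
    rw [key1]; linarith
  -- main inequality: g1 ν α d ≤ g1 ν β d
  have hmain : g1 ν α d ≤ g1 ν β d := by
    unfold g1
    have h3 : ν + 1 + (d - 1) * α * ν
        = (ν + 1 + (d - 1) * β * ν) * (1 + (d - 1) * β * (α - β)) := by
      nlinarith [hstat]
    have h4 : (1 : ℝ) + (d - 1) * β * (α - β) ≤ Real.exp ((d - 1) * β * (α - β)) := by
      linarith [Real.add_one_le_exp ((d - 1) * β * (α - β))]
    have h5 : Real.exp ((d - 1) * β * (α - β))
        ≤ Real.exp ((d - 1) * (α ^ 2 - β ^ 2) / 2) := by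
      apply Real.exp_le_exp.mpr
      nlinarith [sq_nonneg (α - β), hc0.le, hβ0]
    calc (ν + 1 + (d - 1) * α * ν) * Real.exp (-(ν ^ 2 + (d - 1) * α ^ 2) / 2)
        ≤ (ν + 1 + (d - 1) * β * ν) * Real.exp ((d - 1) * (α ^ 2 - β ^ 2) / 2)
            * Real.exp (-(ν ^ 2 + (d - 1) * α ^ 2) / 2) := by
          apply mul_le_mul_of_nonneg_right _ (Real.exp_nonneg _)
          rw [h3]
          exact mul_le_mul_of_nonneg_left (h4.trans h5) hBpos.le
      _ = (ν + 1 + (d - 1) * β * ν) * Real.exp (-(ν ^ 2 + (d - 1) * β ^ 2) / 2) := by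
          rw [mul_assoc, ← Real.exp_add]; ring_nf
  -- g1 ν β d = g2 ν d
  have heq : g1 ν β d = g2 ν d := by
    unfold g1 g2
    rw [key1, key2, ← hs]
    congr 1
    ring
  rw [← heq]; exact hmain
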